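/- Suppose u, v ∈ Δ(K × C × D) are finite information structures with conditionally independent signals (under each, c and d are independent given k) and equal marginals on K × D. Then the value-based distance d(u,v) over all finite zero-sum games equals the distance d₁(u,v) over single-agent problems of player 1, i.e. sup_{g ∈ G} |val(u,g) - val(v,g)| = sup_{g ∈ G₁} |val(u,g) - val(v,g)| where G₁ are payoff functions where player 2's action set is a singleton. -/

import Mathlib

open scoped BigOperators

noncomputable section

/-- A probability distribution on a finite type, given as a nonnegative function summing to 1. -/
def IsDist {α : Type*} [Fintype α] (u : α → ℝ) : Prop :=
  (∀ a, 0 ≤ u a) ∧ ∑ a, u a = 1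

/-- A garbling (stochastic map / behavioral strategy). -/
def IsKernel {α β : Type*} [Fintype β] (q : α → β → ℝ) : Prop :=
  ∀ a, IsDist (q a)

/-- Expected payoff in the zero-sum Bayesian game `Γ(u,g)` when players use
behavioral strategies `σ` and `τ`. -/
def pay {K C D I J : Type*} [Fintype K] [Fintype C] [Fintype D] [Fintype I] [Fintype J]
    (u : K × C × D → ℝ) (g : K → I → J → ℝ) (σ : C → I → ℝ) (τ : D → J → ℝ) : ℝ :=
  ∑ k, ∑ c, ∑ d, ∑ i, ∑ j, u (k, c, d) * σ c i * τ d j * g k i j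

/-- The value (maxmin) of the zero-sum Bayesian game `Γ(u,g)`, player 1 maximizing. -/
def gameVal {K C D I J : Type*} [Fintype K] [Fintype C] [Fintype D] [Fintype I] [Fintype J]
    (u : K × C × D → ℝ) (g : K → I → J → ℝ) : ℝ :=
  sSup {x : ℝ | ∃ σ : C → I → ℝ, IsKernel σ ∧
    x = sInf {y : ℝ | ∃ τ : D → J → ℝ, IsKernel τ ∧ y = pay u g σ τ}}

/-- Garbling of player 1's signal: `(q.u)(k,c,d) = ∑ c', u(k,c',d) q(c|c')`. -/
def garbleL {K C C' D : Type*} [Fintype C] (q : C → C' → ℝ) (u : K × C × D → ℝ) :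
    K × C' × D → ℝ :=
  fun x => ∑ c, u (x.1, c, x.2.2) * q c x.2.1

/-- Garbling of player 2's signal: `(u.q)(k,c,d) = ∑ d', u(k,c,d') q(d|d')`. -/
def garbleR {K C D D' : Type*} [Fintype D] (q : D → D' → ℝ) (u : K × C × D → ℝ) :
    K × C × D' → ℝ :=
  fun x => ∑ d, u (x.1, x.2.1, d) * q d x.2.2

/-- ℓ¹ distance. -/
def l1 {α : Type*} [Fintype α] (u v : α → ℝ) : ℝ := ∑ a, |u a - v a|

/-- Payoff functions bounded by 1. -/
def Bounded1 {K I J : Type*} (g : K → I → J → ℝ) : Prop := ∀ k i j, |g k i j| ≤ 1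

/-- The value-based distance: sup over all finite zero-sum games (with nonempty
finite action sets, payoffs bounded by 1) of the absolute difference of values. -/
def valueDist {K C D C' D' : Type*} [Fintype K] [Fintype C] [Fintype D] [Fintype C'] [Fintype D']
    (u : K × C × D → ℝ) (v : K × C' × D' → ℝ) : ℝ :=
  sSup {x : ℝ | ∃ (m n : ℕ) (g : K → Fin (m + 1) → Fin (n + 1) → ℝ),
    Bounded1 g ∧ x = |gameVal u g - gameVal v g|}

/-- Value of a single-agent decision problem on a single-agent information structure. -/
def val1 {K C I : Type*} [Fintype K] [Fintype C] [Fintype I] [Nonempty I]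
    (u : K × C → ℝ) (g : K → I → ℝ) : ℝ :=
  ∑ c, ⨆ i, ∑ k, u (k, c) * g k i

/-- The single-agent value-based distance. -/
def valueDist1 {K C C' : Type*} [Fintype K] [Fintype C] [Fintype C']
    (u : K × C → ℝ) (v : K × C' → ℝ) : ℝ :=
  sSup {x : ℝ | ∃ (m : ℕ) (g : K → Fin (m + 1) → ℝ),
    (∀ k i, |g k i| ≤ 1) ∧ x = |val1 u g - val1 v g|}

/-- Garbling of the signal in a single-agent structure. -/
def garble1 {K C C' : Type*} [Fintype C] (q : C → C' → ℝ) (u : K × C → ℝ) : K × C' → ℝ :=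
  fun x => ∑ c, u (x.1, c) * q c x.2

end
set_option linter.unusedVariables false
set_option linter.unusedSectionVars false
set_option maxHeartbeats 1000000

section Aux

open Finset

variable {K C D I J : Type*} [Fintype K] [Fintype C] [Fintype D] [Fintype I] [Fintype J]

noncomputable def pureK [DecidableEq I] (s : C → I) : C → I → ℝ := fun c i => if s c = i then 1 else 0

lemma pureK_isKernel [DecidableEq I] (s : C → I) : IsKernel (pureK s) := by
  intro c
  constructor
  · intro i; unfold pureK; split <;> norm_num
  · simp [pureK]

noncomputable def Afun (u : K × C × D → ℝ) (g : K → I → J → ℝ) (τ : D → J → ℝ) : C → I → ℝ :=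
  fun c i => ∑ k, ∑ d, ∑ j, u (k, c, d) * τ d j * g k i j

noncomputable def Bfun (u : K × C × D → ℝ) (g : K → I → J → ℝ) (σ : C → I → ℝ) : D → J → ℝ :=
  fun d j => ∑ k, ∑ c, ∑ i, u (k, c, d) * σ c i * g k i j

private lemma sum5_CIKDJ (f : K → C → D → I → J → ℝ) :
    ∑ k, ∑ c, ∑ d, ∑ i, ∑ j, f k c d i j = ∑ c, ∑ i, ∑ k, ∑ d, ∑ j, f k c d i j :=
  calc ∑ k, ∑ c, ∑ d, ∑ i, ∑ j, f k c d i j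
      = ∑ c, ∑ k, ∑ d, ∑ i, ∑ j, f k c d i j := Finset.sum_comm
    _ = ∑ c, ∑ k, ∑ i, ∑ d, ∑ j, f k c d i j :=
        Finset.sum_congr rfl fun c _ => Finset.sum_congr rfl fun k _ => Finset.sum_comm
    _ = ∑ c, ∑ i, ∑ k, ∑ d, ∑ j, f k c d i j :=
        Finset.sum_congr rfl fun c _ => Finset.sum_comm

private lemma sum5_DJKCI (f : K → C → D → I → J → ℝ) :
    ∑ k, ∑ c, ∑ d, ∑ i, ∑ j, f k c d i j = ∑ d, ∑ j, ∑ k, ∑ c, ∑ i, f k c d i j :=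
  calc ∑ k, ∑ c, ∑ d, ∑ i, ∑ j, f k c d i j
      = ∑ k, ∑ c, ∑ d, ∑ j, ∑ i, f k c d i j :=
        Finset.sum_congr rfl fun k _ => Finset.sum_congr rfl fun c _ =>
          Finset.sum_congr rfl fun d _ => Finset.sum_comm
    _ = ∑ k, ∑ d, ∑ c, ∑ j, ∑ i, f k c d i j :=
        Finset.sum_congr rfl fun k _ => Finset.sum_comm
    _ = ∑ k, ∑ d, ∑ j, ∑ c, ∑ i, f k c d i j :=
        Finset.sum_congr rfl fun k _ => Finset.sum_congr rfl fun d _ => Finset.sum_comm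
    _ = ∑ d, ∑ k, ∑ j, ∑ c, ∑ i, f k c d i j := Finset.sum_comm
    _ = ∑ d, ∑ j, ∑ k, ∑ c, ∑ i, f k c d i j :=
        Finset.sum_congr rfl fun d _ => Finset.sum_comm

lemma pay_A (u : K × C × D → ℝ) (g : K → I → J → ℝ) (σ : C → I → ℝ) (τ : D → J → ℝ) :
    pay u g σ τ = ∑ c, ∑ i, σ c i * Afun u g τ c i := by
  unfold pay Afun
  rw [sum5_CIKDJ]
  refine Finset.sum_congr rfl fun c _ => Finset.sum_congr rfl fun i _ => ?_
  simp only [Finset.mul_sum]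
  exact Finset.sum_congr rfl fun k _ => Finset.sum_congr rfl fun d _ =>
    Finset.sum_congr rfl fun j _ => by ring

lemma pay_B (u : K × C × D → ℝ) (g : K → I → J → ℝ) (σ : C → I → ℝ) (τ : D → J → ℝ) :
    pay u g σ τ = ∑ d, ∑ j, τ d j * Bfun u g σ d j := by
  unfold pay Bfun
  rw [sum5_DJKCI]
  refine Finset.sum_congr rfl fun d _ => Finset.sum_congr rfl fun j _ => ?_
  simp only [Finset.mul_sum]
  exact Finset.sum_congr rfl fun k _ => Finset.sum_congr rfl fun c _ =>
    Finset.sum_congr rfl fun i _ => by ring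

end Aux
section Aux2

open Finset

variable {K C D I J : Type*} [Fintype K] [Fintype C] [Fintype D] [Fintype I] [Fintype J]

lemma exists_ciSup_eq [Nonempty I] (a : I → ℝ) : ∃ i0, (⨆ i, a i) = a i0 ∧ ∀ i, a i ≤ a i0 := by
  obtain ⟨i0, h⟩ := Finite.exists_max a
  exact ⟨i0, le_antisymm (ciSup_le h) (le_ciSup (Set.finite_range a).bddAbove i0), h⟩

lemma exists_ciInf_eq [Nonempty I] (a : I → ℝ) : ∃ i0, (⨅ i, a i) = a i0 ∧ ∀ i, a i0 ≤ a i := by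
  obtain ⟨i0, h⟩ := Finite.exists_min a
  exact ⟨i0, le_antisymm (ciInf_le (Set.finite_range a).bddBelow i0) (le_ciInf h), h⟩

lemma sum_kernel_le_sup [Nonempty I] {q : C → I → ℝ} (hq : IsKernel q) (a : C → I → ℝ) :
    ∑ c, ∑ i, q c i * a c i ≤ ∑ c, ⨆ i, a c i := by
  refine Finset.sum_le_sum fun c _ => ?_
  calc ∑ i, q c i * a c i ≤ ∑ i, q c i * (⨆ i', a c i') := by
        refine Finset.sum_le_sum fun i _ => ?_
        exact mul_le_mul_of_nonneg_left (le_ciSup (Set.finite_range _).bddAbove i) ((hq c).1 i)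
    _ = (∑ i, q c i) * (⨆ i', a c i') := by rw [Finset.sum_mul]
    _ = ⨆ i', a c i' := by rw [(hq c).2, one_mul]

lemma inf_le_sum_kernel [Nonempty J] {q : D → J → ℝ} (hq : IsKernel q) (b : D → J → ℝ) :
    ∑ d, ⨅ j, b d j ≤ ∑ d, ∑ j, q d j * b d j := by
  refine Finset.sum_le_sum fun d _ => ?_
  calc (⨅ j', b d j') = (∑ j, q d j) * (⨅ j', b d j') := by rw [(hq d).2, one_mul]
    _ = ∑ j, q d j * (⨅ j', b d j') := by rw [Finset.sum_mul]
    _ ≤ ∑ j, q d j * b d j := by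
        refine Finset.sum_le_sum fun j _ => ?_
        exact mul_le_mul_of_nonneg_left (ciInf_le (Set.finite_range _).bddBelow j) ((hq d).1 j)

noncomputable def Phi (u : K × C × D → ℝ) (g : K → I → J → ℝ) (σ : C → I → ℝ) : ℝ :=
  ∑ d, ⨅ j, Bfun u g σ d j

noncomputable def Psi (u : K × C × D → ℝ) (g : K → I → J → ℝ) (τ : D → J → ℝ) : ℝ :=
  ∑ c, ⨆ i, Afun u g τ c i

lemma Phi_le_pay [Nonempty J] (u : K × C × D → ℝ) (g : K → I → J → ℝ) (σ : C → I → ℝ)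
    {τ : D → J → ℝ} (hτ : IsKernel τ) : Phi u g σ ≤ pay u g σ τ := by
  rw [pay_B]; exact inf_le_sum_kernel hτ _

lemma pay_le_Psi [Nonempty I] (u : K × C × D → ℝ) (g : K → I → J → ℝ)
    {σ : C → I → ℝ} (hσ : IsKernel σ) (τ : D → J → ℝ) : pay u g σ τ ≤ Psi u g τ := by
  rw [pay_A]; exact sum_kernel_le_sup hσ _

lemma exists_pure_pay_eq_Phi [Nonempty J] [DecidableEq J] (u : K × C × D → ℝ)
    (g : K → I → J → ℝ) (σ : C → I → ℝ) : ∃ t : D → J, pay u g σ (pureK t) = Phi u g σ := by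
  choose t ht _ using fun d => exists_ciInf_eq (Bfun u g σ d)
  refine ⟨t, ?_⟩
  rw [pay_B, Phi]
  refine Finset.sum_congr rfl fun d _ => ?_
  rw [ht d]
  simp [pureK, Finset.sum_ite_eq, ite_mul]

lemma exists_pure_pay_eq_Psi [Nonempty I] [DecidableEq I] (u : K × C × D → ℝ)
    (g : K → I → J → ℝ) (τ : D → J → ℝ) : ∃ s : C → I, pay u g (pureK s) τ = Psi u g τ := by
  choose s hs _ using fun c => exists_ciSup_eq (Afun u g τ c)
  refine ⟨s, ?_⟩
  rw [pay_A, Psi]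
  refine Finset.sum_congr rfl fun c _ => ?_
  rw [hs c]
  simp [pureK, Finset.sum_ite_eq, ite_mul]

lemma innerInf_eq [Nonempty J] (u : K × C × D → ℝ) (g : K → I → J → ℝ) (σ : C → I → ℝ) :
    sInf {y : ℝ | ∃ τ : D → J → ℝ, IsKernel τ ∧ y = pay u g σ τ} = Phi u g σ := by
  classical
  obtain ⟨t, ht⟩ := exists_pure_pay_eq_Phi u g σ
  refine le_antisymm (csInf_le ⟨Phi u g σ, ?_⟩ ⟨pureK t, pureK_isKernel t, ht.symm⟩)
    (le_csInf ⟨_, pureK t, pureK_isKernel t, rfl⟩ ?_)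
  · rintro y ⟨τ, hτ, rfl⟩; exact Phi_le_pay u g σ hτ
  · rintro y ⟨τ, hτ, rfl⟩; exact Phi_le_pay u g σ hτ

lemma gameVal_eq [Nonempty J] (u : K × C × D → ℝ) (g : K → I → J → ℝ) :
    gameVal u g = sSup {x : ℝ | ∃ σ : C → I → ℝ, IsKernel σ ∧ x = Phi u g σ} := by
  unfold gameVal
  congr 1
  ext x
  simp only [Set.mem_setOf_eq, innerInf_eq]

end Aux2
section Aux3

open Finset

variable {K C D I J : Type*} [Fintype K] [Fintype C] [Fintype D] [Fintype I] [Fintype J]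

private lemma abs_sum_le {α : Type*} [Fintype α] (f h : α → ℝ) (hfh : ∀ a, |f a| ≤ h a) :
    |∑ a, f a| ≤ ∑ a, h a :=
  (Finset.abs_sum_le_sum_abs _ _).trans (Finset.sum_le_sum fun a _ => hfh a)

lemma sum_triple (u : K × C × D → ℝ) (hu : ∑ x, u x = 1) : ∑ k, ∑ c, ∑ d, u (k, c, d) = 1 := by
  rw [← hu, Fintype.sum_prod_type]
  exact Finset.sum_congr rfl fun k _ =>
    (Fintype.sum_prod_type (f := fun p : C × D => u (k, p))).symm

lemma pay_abs_le {u : K × C × D → ℝ} {g : K → I → J → ℝ} (hu : IsDist u) (hg : Bounded1 g)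
    {σ : C → I → ℝ} (hσ : IsKernel σ) {τ : D → J → ℝ} (hτ : IsKernel τ) :
    |pay u g σ τ| ≤ 1 := by
  have h1 : ∀ k c d i j, |u (k, c, d) * σ c i * τ d j * g k i j| ≤ u (k, c, d) * σ c i * τ d j := by
    intro k c d i j
    have hn : 0 ≤ u (k, c, d) * σ c i * τ d j :=
      mul_nonneg (mul_nonneg (hu.1 _) ((hσ c).1 i)) ((hτ d).1 j)
    rw [abs_mul, abs_of_nonneg hn]
    exact mul_le_of_le_one_right hn (hg k i j)
  have h2 : |pay u g σ τ| ≤ ∑ k, ∑ c, ∑ d, ∑ i, ∑ j, u (k, c, d) * σ c i * τ d j := by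
    unfold pay
    exact abs_sum_le _ _ fun k => abs_sum_le _ _ fun c => abs_sum_le _ _ fun d =>
      abs_sum_le _ _ fun i => abs_sum_le _ _ fun j => h1 k c d i j
  have h3 : ∀ k c d, ∑ i, ∑ j, u (k, c, d) * σ c i * τ d j = u (k, c, d) := by
    intro k c d
    have : ∀ i, ∑ j, u (k, c, d) * σ c i * τ d j = u (k, c, d) * σ c i := by
      intro i; rw [← Finset.mul_sum, (hτ d).2, mul_one]
    simp only [this]
    rw [← Finset.mul_sum, (hσ c).2, mul_one]
  have h4 : ∑ k, ∑ c, ∑ d, ∑ i, ∑ j, u (k, c, d) * σ c i * τ d j = 1 := by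
    rw [show (∑ k, ∑ c, ∑ d, ∑ i, ∑ j, u (k, c, d) * σ c i * τ d j)
        = ∑ k, ∑ c, ∑ d, u (k, c, d) from
      Finset.sum_congr rfl fun k _ => Finset.sum_congr rfl fun c _ =>
        Finset.sum_congr rfl fun d _ => h3 k c d]
    exact sum_triple u hu.2
  exact h2.trans (le_of_eq h4)

lemma Phi_abs_le [Nonempty J] {u : K × C × D → ℝ} {g : K → I → J → ℝ} (hu : IsDist u)
    (hg : Bounded1 g) {σ : C → I → ℝ} (hσ : IsKernel σ) : |Phi u g σ| ≤ 1 := by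
  classical
  obtain ⟨t, ht⟩ := exists_pure_pay_eq_Phi u g σ
  rw [← ht]
  exact pay_abs_le hu hg hσ (pureK_isKernel t)

lemma Psi_abs_le [Nonempty I] {u : K × C × D → ℝ} {g : K → I → J → ℝ} (hu : IsDist u)
    (hg : Bounded1 g) {τ : D → J → ℝ} (hτ : IsKernel τ) : |Psi u g τ| ≤ 1 := by
  classical
  obtain ⟨s, hs⟩ := exists_pure_pay_eq_Psi u g τ
  rw [← hs]
  exact pay_abs_le hu hg (pureK_isKernel s) hτ

lemma gameVal_abs_le [Nonempty I] [Nonempty J] {u : K × C × D → ℝ} {g : K → I → J → ℝ}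
    (hu : IsDist u) (hg : Bounded1 g) : |gameVal u g| ≤ 1 := by
  classical
  rw [gameVal_eq, abs_le]
  set S := {x : ℝ | ∃ σ : C → I → ℝ, IsKernel σ ∧ x = Phi u g σ} with hS
  have hne : S.Nonempty := ⟨_, pureK (fun _ => Classical.arbitrary I), pureK_isKernel _, rfl⟩
  have hub : ∀ x ∈ S, x ≤ 1 := by
    rintro x ⟨σ, hσ, rfl⟩; exact (abs_le.1 (Phi_abs_le hu hg hσ)).2
  constructor
  · obtain ⟨x, hx⟩ := hne
    have hxl : -1 ≤ x := by
      obtain ⟨σ, hσ, rfl⟩ := hx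
      exact (abs_le.1 (Phi_abs_le hu hg hσ)).1
    exact hxl.trans (le_csSup ⟨1, hub⟩ hx)
  · exact csSup_le hne hub

lemma gameVal_le_of_forall [Nonempty I] [Nonempty J] (u : K × C × D → ℝ) (g : K → I → J → ℝ)
    (z : ℝ) (hz : ∀ σ : C → I → ℝ, IsKernel σ → Phi u g σ ≤ z) : gameVal u g ≤ z := by
  classical
  rw [gameVal_eq]
  refine csSup_le ⟨_, pureK (fun _ => Classical.arbitrary I), pureK_isKernel _, rfl⟩ ?_
  rintro x ⟨σ, hσ, rfl⟩
  exact hz σ hσ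

lemma Phi_le_gameVal [Nonempty I] [Nonempty J] {u : K × C × D → ℝ} {g : K → I → J → ℝ}
    (hu : IsDist u) (hg : Bounded1 g) {σ : C → I → ℝ} (hσ : IsKernel σ) :
    Phi u g σ ≤ gameVal u g := by
  rw [gameVal_eq]
  refine le_csSup ⟨1, ?_⟩ ⟨σ, hσ, rfl⟩
  rintro x ⟨σ', hσ', rfl⟩
  exact (abs_le.1 (Phi_abs_le hu hg hσ')).2

end Aux3
section Minimax

open Finset

variable {K C D I J : Type*} [Fintype K] [Fintype C] [Fintype D] [Fintype I] [Fintype J]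

private lemma sum3_rot {S : Type*} [Fintype S] (f : C → I → S → ℝ) :
    ∑ c, ∑ i, ∑ s, f c i s = ∑ s, ∑ c, ∑ i, f c i s :=
  calc ∑ c, ∑ i, ∑ s, f c i s = ∑ c, ∑ s, ∑ i, f c i s :=
        Finset.sum_congr rfl fun c _ => Finset.sum_comm
    _ = ∑ s, ∑ c, ∑ i, f c i s := Finset.sum_comm

lemma pay_sum_left {S : Type*} [Fintype S] (u : K × C × D → ℝ) (g : K → I → J → ℝ)
    (w : S → ℝ) (σs : S → C → I → ℝ) (τ : D → J → ℝ) :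
    pay u g (fun c i => ∑ s, w s * σs s c i) τ = ∑ s, w s * pay u g (σs s) τ := by
  simp only [pay_A, Finset.mul_sum]
  rw [show (∑ c, ∑ i, (∑ s, w s * σs s c i) * Afun u g τ c i)
      = ∑ c, ∑ i, ∑ s, w s * σs s c i * Afun u g τ c i from
    Finset.sum_congr rfl fun c _ => Finset.sum_congr rfl fun i _ => Finset.sum_mul _ _ _]
  rw [sum3_rot]
  exact Finset.sum_congr rfl fun s _ => Finset.sum_congr rfl fun c _ =>
    Finset.sum_congr rfl fun i _ => by ring

lemma pay_sum_right {T : Type*} [Fintype T] (u : K × C × D → ℝ) (g : K → I → J → ℝ)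
    (w : T → ℝ) (τs : T → D → J → ℝ) (σ : C → I → ℝ) :
    pay u g σ (fun d j => ∑ t, w t * τs t d j) = ∑ t, w t * pay u g σ (τs t) := by
  simp only [pay_B, Finset.mul_sum]
  rw [show (∑ d, ∑ j, (∑ t, w t * τs t d j) * Bfun u g σ d j)
      = ∑ d, ∑ j, ∑ t, w t * τs t d j * Bfun u g σ d j from
    Finset.sum_congr rfl fun d _ => Finset.sum_congr rfl fun j _ => Finset.sum_mul _ _ _]
  rw [sum3_rot]
  exact Finset.sum_congr rfl fun t _ => Finset.sum_congr rfl fun d _ =>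
    Finset.sum_congr rfl fun j _ => by ring

lemma kerOf_isKernel {T α β : Type*} [Fintype T] [Fintype α] [Fintype β] [DecidableEq β]
    (μ : T → ℝ) (hμ : μ ∈ stdSimplex ℝ T) (ts : T → α → β) :
    IsKernel (fun d j => ∑ t, μ t * pureK (ts t) d j) := by
  intro d
  constructor
  · intro j
    refine Finset.sum_nonneg fun t _ => mul_nonneg (hμ.1 t) ?_
    unfold pureK; split <;> norm_num
  · rw [Finset.sum_comm]
    calc ∑ t, ∑ j, μ t * pureK (ts t) d j = ∑ t, μ t := by
          refine Finset.sum_congr rfl fun t _ => ?_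
          have h1 : ∑ j, pureK (ts t) d j = 1 := ((pureK_isKernel (ts t)) d).2
          rw [← Finset.mul_sum, h1, mul_one]
      _ = 1 := hμ.2

lemma minimax [Nonempty I] [Nonempty J] {u : K × C × D → ℝ} {g : K → I → J → ℝ}
    (hu : IsDist u) (hg : Bounded1 g) (ε : ℝ) (hε : 0 < ε) :
    ∃ τ : D → J → ℝ, IsKernel τ ∧ Psi u g τ ≤ gameVal u g + ε := by
  classical
  by_contra hcon
  push_neg at hcon
  set c : ℝ := gameVal u g + ε with hc
  set M : (C → I) → (D → J) → ℝ := fun s t => pay u g (pureK s) (pureK t) with hM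
  set Lmap : ((D → J) → ℝ) →ₗ[ℝ] ((C → I) → ℝ) :=
    { toFun := fun μ s => ∑ t, μ t * M s t
      map_add' := by
        intro μ ν; funext s
        simp only [Pi.add_apply, add_mul, Finset.sum_add_distrib]
      map_smul' := by
        intro r μ; funext s
        simp only [Pi.smul_apply, smul_eq_mul, RingHom.id_apply, Finset.mul_sum, mul_assoc] } with hL
  set A : Set ((C → I) → ℝ) := Lmap '' stdSimplex ℝ (D → J) with hA
  set O : Set ((C → I) → ℝ) := {x | ∀ s, x s ≤ c} with hO
  have hOclosed : IsClosed O := by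
    have : O = ⋂ s, {x : (C → I) → ℝ | x s ≤ c} := by
      ext x; simp [hO, Set.mem_iInter]
    rw [this]
    exact isClosed_iInter fun s => isClosed_le (continuous_apply s) continuous_const
  have hOconv : Convex ℝ O := by
    intro x hx y hy a b ha hb hab
    intro s
    calc a * x s + b * y s ≤ a * c + b * c :=
          add_le_add (mul_le_mul_of_nonneg_left (hx s) ha)
            (mul_le_mul_of_nonneg_left (hy s) hb)
      _ = c := by rw [← add_mul, hab, one_mul]
  have hAconv : Convex ℝ A := (convex_stdSimplex ℝ _).linear_image Lmap
  have hAcomp : IsCompact A := (isCompact_stdSimplex ℝ _).image Lmap.continuous_of_finiteDimensional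
  have hbig : ∀ μ ∈ stdSimplex ℝ (D → J), ∃ s, c < Lmap μ s := by
    intro μ hμ
    have hker : IsKernel (fun d j => ∑ t, μ t * pureK t d j) := kerOf_isKernel μ hμ id
    obtain ⟨s, hs⟩ := exists_pure_pay_eq_Psi u g (fun d j => ∑ t, μ t * pureK t d j)
    refine ⟨s, ?_⟩
    have h1 : c < Psi u g (fun d j => ∑ t, μ t * pureK t d j) := hcon _ hker
    have h2 : Lmap μ s = Psi u g (fun d j => ∑ t, μ t * pureK t d j) := by
      rw [← hs]
      show ∑ t, μ t * M s t = _
      simp only [hM]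
      exact (pay_sum_right u g μ (fun t => pureK t) (pureK s)).symm
    rw [h2]; exact h1
  have hdisj : Disjoint O A := by
    rw [Set.disjoint_left]
    rintro x hxO ⟨μ, hμ, rfl⟩
    obtain ⟨s, hs⟩ := hbig μ hμ
    exact absurd (hxO s) (not_le.2 hs)
  obtain ⟨f, a, b, hfa, hab, hfb⟩ :=
    geometric_hahn_banach_closed_compact hOconv hOclosed hAconv hAcomp hdisj
  set e : (C → I) → ((C → I) → ℝ) := fun s => Pi.single s (1 : ℝ) with he
  set p : (C → I) → ℝ := fun s => f (e s) with hp
  have f_apply : ∀ x : (C → I) → ℝ, f x = ∑ s, x s * p s := by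
    intro x
    have hx : x = ∑ s, (x s) • e s := by
      rw [show (fun s => (x s) • e s) = fun s => Pi.single s (x s) from ?_,
        Finset.univ_sum_single]
      funext s
      rw [he]
      dsimp only
      rw [← Pi.single_smul, smul_eq_mul, mul_one]
    conv_lhs => rw [hx]
    rw [map_sum]
    exact Finset.sum_congr rfl fun s _ => by rw [map_smul, smul_eq_mul]
  set cOne : (C → I) → ℝ := fun _ => c with hcOne
  have hcOneO : cOne ∈ O := fun s => le_refl c
  have hp_nonneg : ∀ s, 0 ≤ p s := by
    intro s0
    by_contra hps
    push_neg at hps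
    set r : ℝ := max 0 ((a - f cOne) / (-(p s0))) with hr
    have hr0 : 0 ≤ r := le_max_left _ _
    have hmem : (cOne - r • e s0) ∈ O := by
      intro s
      have h0 : 0 ≤ r * e s0 s := by
        refine mul_nonneg hr0 ?_
        rw [he]; dsimp only
        rw [Pi.single_apply]; split <;> norm_num
      have : (cOne - r • e s0) s = c - r * e s0 s := by
        simp [hcOne]
      rw [this]
      linarith
    have hlt : f (cOne - r • e s0) < a := hfa _ hmem
    rw [map_sub, map_smul, smul_eq_mul] at hlt
    have hpos : 0 < -(p s0) := by linarith
    have hge : a - f cOne ≤ r * (-(p s0)) := by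
      have h1 : (a - f cOne) / (-(p s0)) ≤ r := le_max_right _ _
      calc a - f cOne = ((a - f cOne) / (-(p s0))) * (-(p s0)) := by
            rw [div_mul_cancel₀ _ hpos.ne']
        _ ≤ r * (-(p s0)) := mul_le_mul_of_nonneg_right h1 hpos.le
    have heq : f cOne - r * f (e s0) = f cOne + r * (-(p s0)) := by
      rw [hp]; ring
    rw [heq] at hlt
    linarith
  set P : ℝ := ∑ s, p s with hP
  have hfcOne : f cOne = c * P := by
    rw [f_apply, hP, Finset.mul_sum]
  have hAne : A.Nonempty := by
    refine ⟨Lmap (fun t => if t = Classical.arbitrary (D → J) then 1 else 0), ⟨_, ?_, rfl⟩⟩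
    constructor
    · intro t; dsimp only; split <;> norm_num
    · simp
  have hPpos : 0 < P := by
    rcases lt_or_eq_of_le (Finset.sum_nonneg fun s _ => hp_nonneg s) with h | h
    · exact h
    · exfalso
      have hzero : ∀ s, p s = 0 := by
        intro s
        exact (Finset.sum_eq_zero_iff_of_nonneg (fun s _ => hp_nonneg s)).1 h.symm s
          (Finset.mem_univ s)
      have hfz : ∀ x, f x = 0 := by
        intro x; rw [f_apply]; simp [hzero]
      obtain ⟨y, hy⟩ := hAne
      have h1 : f cOne < a := hfa _ hcOneO
      have h2 : b < f y := hfb _ hy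
      rw [hfz] at h1
      rw [hfz] at h2
      linarith
  have hMt : ∀ t : D → J, c * P < ∑ s, M s t * p s := by
    intro t
    have hδ : (fun t' => if t' = t then (1:ℝ) else 0) ∈ stdSimplex ℝ (D → J) := by
      constructor
      · intro t'; dsimp only; split <;> norm_num
      · simp
    have hmem : Lmap (fun t' => if t' = t then (1:ℝ) else 0) ∈ A := ⟨_, hδ, rfl⟩
    have h1 : b < f (Lmap (fun t' => if t' = t then (1:ℝ) else 0)) := hfb _ hmem
    have h2 : f cOne < a := hfa _ hcOneO
    have h3 : f (Lmap (fun t' => if t' = t then (1:ℝ) else 0)) = ∑ s, M s t * p s := by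
      rw [f_apply]
      refine Finset.sum_congr rfl fun s _ => ?_
      congr 1
      show (∑ t', (if t' = t then (1:ℝ) else 0) * M s t') = M s t
      simp [ite_mul]
    rw [h3] at h1
    rw [hfcOne] at h2
    linarith
  set sigL : C → I → ℝ := fun ci i => ∑ s, (p s / P) * pureK s ci i with hsigL
  have hsigLker : IsKernel sigL := by
    refine kerOf_isKernel (fun s => p s / P) ?_ id
    constructor
    · intro s; exact div_nonneg (hp_nonneg s) hPpos.le
    · rw [← Finset.sum_div, ← hP, div_self hPpos.ne']
  obtain ⟨t', ht'⟩ := exists_pure_pay_eq_Phi u g sigL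
  have hpayt : pay u g sigL (pureK t') = (∑ s, M s t' * p s) / P := by
    rw [hsigL, pay_sum_left u g (fun s => p s / P) (fun s => pureK s) (pureK t'),
      Finset.sum_div]
    exact Finset.sum_congr rfl fun s _ => by rw [hM]; ring
  have hPhi : c < Phi u g sigL := by
    rw [← ht', hpayt, lt_div_iff₀ hPpos]
    have := hMt t'
    linarith
  have hfin : Phi u g sigL ≤ gameVal u g := Phi_le_gameVal hu hg hsigLker
  rw [hc] at hPhi
  linarith

end Minimax
section Single

open Finset

variable {K C D I J : Type*} [Fintype K] [Fintype C] [Fintype D] [Fintype I] [Fintype J]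

lemma val_singleton [Nonempty I] (u : K × C × D → ℝ) (g : K → I → Fin 1 → ℝ) :
    gameVal u g = ∑ c, ⨆ i, ∑ k, (∑ d, u (k, c, d)) * g k i 0 := by
  classical
  set β : C → I → ℝ := fun c i => ∑ k, (∑ d, u (k, c, d)) * g k i 0 with hβ
  have claim1 : ∀ σ : C → I → ℝ, Phi u g σ = ∑ c, ∑ i, σ c i * β c i := by
    intro σ
    obtain ⟨t, ht⟩ := exists_pure_pay_eq_Phi u g σ
    rw [← ht, pay_A]
    refine Finset.sum_congr rfl fun c _ => Finset.sum_congr rfl fun i _ => ?_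
    congr 1
    show Afun u g (pureK t) c i = β c i
    unfold Afun
    rw [hβ]
    refine Finset.sum_congr rfl fun k _ => ?_
    rw [Finset.sum_mul]
    refine Finset.sum_congr rfl fun d _ => ?_
    rw [Fin.sum_univ_one]
    have h1 : pureK t d 0 = 1 := by
      unfold pureK
      rw [if_pos (Subsingleton.elim (t d) 0)]
    rw [h1, mul_one]
  rw [gameVal_eq]
  have hub : ∀ x ∈ {x : ℝ | ∃ σ : C → I → ℝ, IsKernel σ ∧ x = Phi u g σ}, x ≤ ∑ c, ⨆ i, β c i := by
    rintro x ⟨σ, hσ, rfl⟩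
    rw [claim1 σ]
    exact sum_kernel_le_sup hσ _
  refine le_antisymm (csSup_le ⟨_, pureK (fun _ => Classical.arbitrary I), pureK_isKernel _, rfl⟩
    hub) ?_
  choose s hs _ using fun c => exists_ciSup_eq (β c)
  have hmem : (∑ c, ⨆ i, β c i) ∈ {x : ℝ | ∃ σ : C → I → ℝ, IsKernel σ ∧ x = Phi u g σ} := by
    refine ⟨pureK s, pureK_isKernel s, ?_⟩
    rw [claim1 (pureK s)]
    refine Finset.sum_congr rfl fun c _ => ?_
    rw [hs c]
    simp [pureK, Finset.sum_ite_eq, ite_mul]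
  exact le_csSup ⟨_, hub⟩ hmem

noncomputable def hfun (u : K × C × D → ℝ) (g : K → I → J → ℝ) (τ : D → J → ℝ) : K → I → ℝ :=
  fun k i => if (∑ c, ∑ d, u (k, c, d)) = 0 then 0
    else (∑ d, (∑ c, u (k, c, d)) * (∑ j, τ d j * g k i j)) / (∑ c, ∑ d, u (k, c, d))

lemma u_zero_of_total_zero {u : K × C × D → ℝ} (hu0 : ∀ x, 0 ≤ u x) {k : K}
    (hk : (∑ c, ∑ d, u (k, c, d)) = 0) : ∀ c d, u (k, c, d) = 0 := by
  intro c d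
  have h1 : ∀ c' ∈ Finset.univ, (0:ℝ) ≤ ∑ d', u (k, c', d') :=
    fun c' _ => Finset.sum_nonneg fun d' _ => hu0 _
  have h2 : ∑ d', u (k, c, d') = 0 :=
    (Finset.sum_eq_zero_iff_of_nonneg h1).1 hk c (Finset.mem_univ c)
  exact (Finset.sum_eq_zero_iff_of_nonneg fun d' _ => hu0 _).1 h2 d (Finset.mem_univ d)

lemma pay_factor (u : K × C × D → ℝ) (hu0 : ∀ x, 0 ≤ u x)
    (hci : ∀ k c d, u (k, c, d) * (∑ c', ∑ d', u (k, c', d'))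
      = (∑ d', u (k, c, d')) * (∑ c', u (k, c', d)))
    (g : K → I → J → ℝ) (τ : D → J → ℝ) (σ : C → I → ℝ) :
    pay u g σ τ = ∑ c, ∑ i, σ c i * (∑ k, (∑ d, u (k, c, d)) * hfun u g τ k i) := by
  rw [pay_A]
  refine Finset.sum_congr rfl fun c _ => Finset.sum_congr rfl fun i _ => ?_
  congr 1
  show Afun u g τ c i = _
  unfold Afun
  refine Finset.sum_congr rfl fun k _ => ?_
  by_cases hk : (∑ c', ∑ d', u (k, c', d')) = 0
  · have hz := u_zero_of_total_zero hu0 hk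
    have h1 : ∑ d, u (k, c, d) = 0 := Finset.sum_eq_zero fun d _ => hz c d
    rw [h1, zero_mul]
    exact Finset.sum_eq_zero fun d _ => Finset.sum_eq_zero fun j _ => by rw [hz c d]; ring
  · have hrep : ∀ d, u (k, c, d)
        = (∑ d', u (k, c, d')) * (∑ c', u (k, c', d)) / (∑ c', ∑ d', u (k, c', d')) := by
      intro d
      rw [eq_div_iff hk]
      exact hci k c d
    calc ∑ d, ∑ j, u (k, c, d) * τ d j * g k i j
        = ∑ d, u (k, c, d) * (∑ j, τ d j * g k i j) := by
          refine Finset.sum_congr rfl fun d _ => ?_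
          rw [Finset.mul_sum]
          exact Finset.sum_congr rfl fun j _ => by ring
      _ = ∑ d, (∑ d', u (k, c, d')) * ((∑ c', u (k, c', d)) * (∑ j, τ d j * g k i j)
            / (∑ c', ∑ d', u (k, c', d'))) := by
          refine Finset.sum_congr rfl fun d _ => ?_
          rw [hrep d]; ring
      _ = (∑ d', u (k, c, d')) * hfun u g τ k i := by
          rw [← Finset.mul_sum, hfun, if_neg hk, Finset.sum_div]

lemma hfun_eq {u v : K × C × D → ℝ} (hmarg : ∀ k d, ∑ c, u (k, c, d) = ∑ c, v (k, c, d))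
    (g : K → I → J → ℝ) (τ : D → J → ℝ) : hfun v g τ = hfun u g τ := by
  funext k i
  unfold hfun
  have h1 : ∀ d, ∑ c, v (k, c, d) = ∑ c, u (k, c, d) := fun d => (hmarg k d).symm
  have h2 : (∑ c, ∑ d, v (k, c, d)) = ∑ c, ∑ d, u (k, c, d) := by
    rw [Finset.sum_comm, Finset.sum_comm (f := fun c d => u (k, c, d))]
    exact Finset.sum_congr rfl fun d _ => h1 d
  simp only [h1, h2]

lemma hfun_abs_le {u : K × C × D → ℝ} {g : K → I → J → ℝ} (hu0 : ∀ x, 0 ≤ u x)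
    (hg : Bounded1 g) {τ : D → J → ℝ} (hτ : IsKernel τ) (k : K) (i : I) :
    |hfun u g τ k i| ≤ 1 := by
  unfold hfun
  by_cases hk : (∑ c, ∑ d, u (k, c, d)) = 0
  · rw [if_pos hk]; norm_num
  · rw [if_neg hk]
    have hpos : 0 < ∑ c, ∑ d, u (k, c, d) := by
      rcases lt_or_eq_of_le (Finset.sum_nonneg fun c _ =>
        Finset.sum_nonneg fun d _ => hu0 _) with h | h
      · exact h
      · exact absurd h.symm hk
    rw [abs_div, abs_of_pos hpos, div_le_one hpos]
    have hτg : ∀ d, |∑ j, τ d j * g k i j| ≤ 1 := by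
      intro d
      calc |∑ j, τ d j * g k i j| ≤ ∑ j, |τ d j * g k i j| := Finset.abs_sum_le_sum_abs _ _
        _ ≤ ∑ j, τ d j := by
            refine Finset.sum_le_sum fun j _ => ?_
            rw [abs_mul, abs_of_nonneg ((hτ d).1 j)]
            exact mul_le_of_le_one_right ((hτ d).1 j) (hg k i j)
        _ = 1 := (hτ d).2
    calc |∑ d, (∑ c, u (k, c, d)) * (∑ j, τ d j * g k i j)|
        ≤ ∑ d, |(∑ c, u (k, c, d)) * (∑ j, τ d j * g k i j)| := Finset.abs_sum_le_sum_abs _ _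
      _ ≤ ∑ d, (∑ c, u (k, c, d)) := by
          refine Finset.sum_le_sum fun d _ => ?_
          have hc : 0 ≤ ∑ c, u (k, c, d) := Finset.sum_nonneg fun c _ => hu0 _
          rw [abs_mul, abs_of_nonneg hc]
          exact mul_le_of_le_one_right hc (hτg d)
      _ = ∑ c, ∑ d, u (k, c, d) := Finset.sum_comm

end Single
section KeyLemma

open Finset

variable {K C D : Type*} [Fintype K] [Fintype C] [Fintype D]

lemma key {u v : K × C × D → ℝ} (hu : IsDist u) (hv : IsDist v)
    (hciu : ∀ k c d, u (k, c, d) * (∑ c', ∑ d', u (k, c', d'))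
      = (∑ d', u (k, c, d')) * (∑ c', u (k, c', d)))
    (hciv : ∀ k c d, v (k, c, d) * (∑ c', ∑ d', v (k, c', d'))
      = (∑ d', v (k, c, d')) * (∑ c', v (k, c', d)))
    (hmarg : ∀ k d, ∑ c, u (k, c, d) = ∑ c, v (k, c, d))
    (D1 : ℝ)
    (hD1 : ∀ (m : ℕ) (g' : K → Fin (m + 1) → Fin 1 → ℝ),
      Bounded1 g' → gameVal u g' ≤ gameVal v g' + D1)
    {m n : ℕ} (g : K → Fin (m + 1) → Fin (n + 1) → ℝ) (hg : Bounded1 g) :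
    gameVal u g ≤ gameVal v g + D1 := by
  classical
  have hmain : ∀ ε > 0, gameVal u g ≤ gameVal v g + D1 + ε := by
    intro ε hε
    obtain ⟨τ, hτker, hτ⟩ := minimax hv hg ε hε
    set h : K → Fin (m + 1) → ℝ := hfun u g τ with hh
    set g' : K → Fin (m + 1) → Fin 1 → ℝ := fun k i _ => h k i with hg'def
    have hg' : Bounded1 g' := fun k i j => hfun_abs_le hu.1 hg hτker k i
    have h1 : gameVal u g ≤ gameVal u g' := by
      refine gameVal_le_of_forall u g _ ?_
      intro σ hσ
      calc Phi u g σ ≤ pay u g σ τ := Phi_le_pay u g σ hτker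
        _ = ∑ c, ∑ i, σ c i * (∑ k, (∑ d, u (k, c, d)) * h k i) :=
            pay_factor u hu.1 hciu g τ σ
        _ ≤ ∑ c, ⨆ i, (∑ k, (∑ d, u (k, c, d)) * h k i) := sum_kernel_le_sup hσ _
        _ = gameVal u g' := (val_singleton u g').symm
    have h2 : gameVal u g' ≤ gameVal v g' + D1 := hD1 m g' hg'
    have h3 : gameVal v g' ≤ gameVal v g + ε := by
      rw [val_singleton v g']
      choose s hs _ using fun c => exists_ciSup_eq (fun i => ∑ k, (∑ d, v (k, c, d)) * h k i)
      have hstep : (∑ c, ⨆ i, ∑ k, (∑ d, v (k, c, d)) * g' k i 0) = pay v g (pureK s) τ := by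
        rw [pay_factor v hv.1 hciv g τ (pureK s)]
        have hvh : hfun v g τ = h := by rw [hh]; exact hfun_eq hmarg g τ
        rw [hvh]
        refine Finset.sum_congr rfl fun c _ => ?_
        show (⨆ i, ∑ k, (∑ d, v (k, c, d)) * h k i) = _
        rw [hs c]
        simp [pureK, Finset.sum_ite_eq, ite_mul]
      rw [hstep]
      calc pay v g (pureK s) τ ≤ Psi v g τ := pay_le_Psi v g (pureK_isKernel s) τ
        _ ≤ gameVal v g + ε := hτ
    linarith
  by_contra hcon
  push_neg at hcon
  have : gameVal u g ≤ gameVal v g + D1 + (gameVal u g - (gameVal v g + D1)) / 2 :=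
    hmain _ (by linarith)
  linarith

end KeyLemma

theorem stmt6 {K C D : Type*} [Fintype K] [Fintype C] [Fintype D]
    (u v : K × C × D → ℝ) (hu : IsDist u) (hv : IsDist v)
    (hciu : ∀ k c d, u (k, c, d) * (∑ c', ∑ d', u (k, c', d'))
      = (∑ d', u (k, c, d')) * (∑ c', u (k, c', d)))
    (hciv : ∀ k c d, v (k, c, d) * (∑ c', ∑ d', v (k, c', d'))
      = (∑ d', v (k, c, d')) * (∑ c', v (k, c', d)))
    (hmarg : ∀ k d, ∑ c, u (k, c, d) = ∑ c, v (k, c, d)) :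
    valueDist u v
      = sSup {x : ℝ | ∃ (m : ℕ) (g : K → Fin (m + 1) → Fin 1 → ℝ),
          Bounded1 g ∧ x = |gameVal u g - gameVal v g|} := by
  classical
  set R : Set ℝ := {x : ℝ | ∃ (m : ℕ) (g : K → Fin (m + 1) → Fin 1 → ℝ),
          Bounded1 g ∧ x = |gameVal u g - gameVal v g|} with hR
  set L : Set ℝ := {x : ℝ | ∃ (m n : ℕ) (g : K → Fin (m + 1) → Fin (n + 1) → ℝ),
    Bounded1 g ∧ x = |gameVal u g - gameVal v g|} with hL
  have hzb : Bounded1 (fun (_ : K) (_ : Fin 1) (_ : Fin 1) => (0:ℝ)) := by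
    intro k i j; norm_num
  have hRne : R.Nonempty := ⟨_, 0, fun _ _ _ => (0:ℝ), hzb, rfl⟩
  have hLne : L.Nonempty := ⟨_, 0, 0, fun _ _ _ => (0:ℝ), hzb, rfl⟩
  have hRbdd : BddAbove R := by
    refine ⟨2, ?_⟩
    rintro x ⟨m, g, hb, rfl⟩
    have h1 := gameVal_abs_le hu hb
    have h2 := gameVal_abs_le hv hb
    calc |gameVal u g - gameVal v g| ≤ |gameVal u g| + |gameVal v g| := abs_sub _ _
      _ ≤ 2 := by linarith
  have hLbdd : BddAbove L := by
    refine ⟨2, ?_⟩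
    rintro x ⟨m, n, g, hb, rfl⟩
    have h1 := gameVal_abs_le hu hb
    have h2 := gameVal_abs_le hv hb
    calc |gameVal u g - gameVal v g| ≤ |gameVal u g| + |gameVal v g| := abs_sub _ _
      _ ≤ 2 := by linarith
  have hD1u : ∀ (m : ℕ) (g' : K → Fin (m + 1) → Fin 1 → ℝ),
      Bounded1 g' → gameVal u g' ≤ gameVal v g' + sSup R := by
    intro m g' hb'
    have hmem : |gameVal u g' - gameVal v g'| ∈ R := ⟨m, g', hb', rfl⟩
    have h1 := le_csSup hRbdd hmem
    have h2 : gameVal u g' - gameVal v g' ≤ |gameVal u g' - gameVal v g'| := le_abs_self _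
    linarith
  have hD1v : ∀ (m : ℕ) (g' : K → Fin (m + 1) → Fin 1 → ℝ),
      Bounded1 g' → gameVal v g' ≤ gameVal u g' + sSup R := by
    intro m g' hb'
    have hmem : |gameVal u g' - gameVal v g'| ∈ R := ⟨m, g', hb', rfl⟩
    have h1 := le_csSup hRbdd hmem
    have h2 : gameVal v g' - gameVal u g' ≤ |gameVal u g' - gameVal v g'| := by
      rw [abs_sub_comm]; exact le_abs_self _
    linarith
  have hmarg' : ∀ k d, ∑ c, v (k, c, d) = ∑ c, u (k, c, d) := fun k d => (hmarg k d).symm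
  show sSup L = sSup R
  apply le_antisymm
  · refine csSup_le hLne ?_
    rintro x ⟨m, n, g, hb, rfl⟩
    rw [abs_sub_le_iff]
    constructor
    · have := key hu hv hciu hciv hmarg (sSup R) hD1u g hb
      linarith
    · have := key hv hu hciv hciu hmarg' (sSup R) hD1v g hb
      linarith
  · refine csSup_le hRne ?_
    rintro x ⟨m, g, hb, rfl⟩
    exact le_csSup hLbdd ⟨m, 0, g, hb, rfl⟩
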